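/- Consider U(θ, ω) = (1/2)θᵀθ - (1/2)ωᵀω + θᵀCω with C ∈ ℝ^{p×p} full rank, and the SGA iterates θ_{t+1} = θ_t - η∇_θU(θ_t,ω_t), ω_{t+1} = ω_t + η∇_ωU(θ_t,ω_t). Then for any learning rate η ∈ ℝ, ‖θ_{t+1}‖² + ‖ω_{t+1}‖² ≥ (λ_min(CᵀC)/(1 + λ_min(CᵀC)))·(‖θ_t‖² + ‖ω_t‖²). -/

import Mathlib

open Matrix
noncomputable section

/-- Largest eigenvalue (for symmetric matrices: sup of real spectrum). -/
def lamMax {n : Type*} [Fintype n] [DecidableEq n] (M : Matrix n n ℝ) : ℝ :=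
  sSup (spectrum ℝ M)

/-- Smallest eigenvalue (for symmetric matrices: inf of real spectrum). -/
def lamMin {n : Type*} [Fintype n] [DecidableEq n] (M : Matrix n n ℝ) : ℝ :=
  sInf (spectrum ℝ M)

/-- Operator (spectral) norm of a square real matrix. -/
def opNorm {n : Type*} [Fintype n] [DecidableEq n] (M : Matrix n n ℝ) : ℝ :=
  ‖toEuclideanCLM (𝕜 := ℝ) M‖

open Classical in
/-- Positive semidefinite square root (junk value `0` if `M` is not PSD). -/
def msqrt {n : Type*} [Fintype n] [DecidableEq n] (M : Matrix n n ℝ) : Matrix n n ℝ :=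
  if h : M.PosSemidef then h.1.eigenvectorUnitary.1 * diagonal (fun i => Real.sqrt (h.1.eigenvalues i)) *
    (star h.1.eigenvectorUnitary : Matrix n n ℝ) else 0

open RealInnerProductSpace in
lemma rayleigh_min {n : Type*} [Fintype n] [DecidableEq n] {M : Matrix n n ℝ}
    (hM : M.IsHermitian) (x : EuclideanSpace ℝ n) :
    lamMin M * ‖x‖ ^ 2 ≤ ⟪x, toEuclideanCLM (𝕜 := ℝ) M x⟫ := by
  have hsa : _root_.IsSelfAdjoint (toEuclideanCLM (𝕜 := ℝ) M) := by
    rw [_root_.IsSelfAdjoint, ← map_star]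
    exact congrArg _ hM
  have hsym := hsa.isSymmetric
  have hsym' : ∀ (u v : EuclideanSpace ℝ n),
      ⟪toEuclideanCLM (𝕜 := ℝ) M u, v⟫ = ⟪u, toEuclideanCLM (𝕜 := ℝ) M v⟫ :=
    fun u v => hsym u v
  set b := hM.eigenvectorBasis with hb
  have hbdd : BddBelow (spectrum ℝ M) := (Matrix.finite_real_spectrum (A := M)).bddBelow
  have hmin : ∀ i, lamMin M ≤ hM.eigenvalues i := fun i =>
    csInf_le hbdd (hM.eigenvalues_mem_spectrum_real i)
  have hAb : ∀ i, toEuclideanCLM (𝕜 := ℝ) M (b i) = hM.eigenvalues i • b i := by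
    intro i
    apply (WithLp.equiv 2 _).injective
    simpa using hM.mulVec_eigenvectorBasis i
  have hinner : ⟪x, toEuclideanCLM (𝕜 := ℝ) M x⟫
      = ∑ i, hM.eigenvalues i * ⟪b i, x⟫ ^ 2 := by
    rw [← b.sum_inner_mul_inner x (toEuclideanCLM (𝕜 := ℝ) M x)]
    refine Finset.sum_congr rfl fun i _ => ?_
    rw [← hsym' (b i) x, hAb i, inner_smul_left, real_inner_comm x (b i)]
    simp only [starRingEnd_apply, star_trivial]
    ring
  have hnorm : ‖x‖ ^ 2 = ∑ i, ⟪b i, x⟫ ^ 2 := by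
    rw [← real_inner_self_eq_norm_sq, ← b.sum_inner_mul_inner x x]
    refine Finset.sum_congr rfl fun i _ => ?_
    rw [real_inner_comm x (b i)]; ring
  rw [hinner, hnorm, Finset.mul_sum]
  exact Finset.sum_le_sum fun i _ =>
    mul_le_mul_of_nonneg_right (hmin i) (sq_nonneg _)

lemma isUnit_of_rank_eq {p : ℕ} (C : Matrix (Fin p) (Fin p) ℝ) (hC : C.rank = p) : IsUnit C := by
  rw [← Matrix.mulVec_injective_iff_isUnit]
  have hsurj : Function.Surjective C.mulVecLin := by
    rw [← LinearMap.range_eq_top]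
    apply Submodule.eq_top_of_finrank_eq
    rw [Module.finrank_fin_fun]
    exact hC
  have hinj : Function.Injective C.mulVecLin :=
    LinearMap.injective_iff_surjective.mpr hsurj
  intro x y h
  exact hinj (show C.mulVecLin x = C.mulVecLin y by simpa using h)

lemma lamMin_nonneg {p : ℕ} (C : Matrix (Fin p) (Fin p) ℝ) : 0 ≤ lamMin (Cᵀ * C) := by
  have hps : (Cᵀ * C).PosSemidef := by
    have := Matrix.posSemidef_conjTranspose_mul_self C
    rwa [Matrix.conjTranspose_eq_transpose_of_trivial] at this
  apply Real.sInf_nonneg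
  intro x hx
  rw [hps.isHermitian.spectrum_real_eq_range_eigenvalues] at hx
  obtain ⟨i, rfl⟩ := hx
  exact hps.eigenvalues_nonneg i

lemma lamMin_comm {p : ℕ} (C : Matrix (Fin p) (Fin p) ℝ) (hu : IsUnit C) :
    lamMin (C * Cᵀ) = lamMin (Cᵀ * C) := by
  have h1 : (↑hu.unit⁻¹ : Matrix (Fin p) (Fin p) ℝ) * C = 1 := by
    have h := hu.unit.inv_mul
    rwa [hu.unit_spec] at h
  have h2 : Cᵀ * C = (↑hu.unit⁻¹ : Matrix (Fin p) (Fin p) ℝ) * (C * Cᵀ) *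
      (↑hu.unit : Matrix (Fin p) (Fin p) ℝ) := by
    rw [hu.unit_spec, ← mul_assoc, h1, one_mul]
  have h3 : spectrum ℝ (Cᵀ * C) = spectrum ℝ (C * Cᵀ) := by
    rw [h2]; exact spectrum.units_conjugate' (u := hu.unit)
  rw [lamMin, lamMin, h3]

set_option maxHeartbeats 1600000 in
open RealInnerProductSpace in
theorem stmt3 {p : ℕ} (C : Matrix (Fin p) (Fin p) ℝ) (hC : C.rank = p) (η : ℝ)
    (θ ω : ℕ → EuclideanSpace ℝ (Fin p))
    (hθ : ∀ t, θ (t + 1) = θ t - η • (θ t + toEuclideanCLM (𝕜 := ℝ) C (ω t)))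
    (hω : ∀ t, ω (t + 1) = ω t + η • (toEuclideanCLM (𝕜 := ℝ) Cᵀ (θ t) - ω t)) :
    ∀ t, ‖θ (t + 1)‖ ^ 2 + ‖ω (t + 1)‖ ^ 2 ≥
      (lamMin (Cᵀ * C) / (1 + lamMin (Cᵀ * C))) * (‖θ t‖ ^ 2 + ‖ω t‖ ^ 2) := by
  intro t
  have hBadj : toEuclideanCLM (𝕜 := ℝ) Cᵀ =
      ContinuousLinearMap.adjoint (toEuclideanCLM (𝕜 := ℝ) C) := by
    have hsC : star C = Cᵀ := by
      rw [Matrix.star_eq_conjTranspose, Matrix.conjTranspose_eq_transpose_of_trivial]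
    rw [← ContinuousLinearMap.star_eq_adjoint, ← map_star, hsC]
  set u := toEuclideanCLM (𝕜 := ℝ) C (ω t) with hu
  set v := toEuclideanCLM (𝕜 := ℝ) Cᵀ (θ t) with hv
  set lam := lamMin (Cᵀ * C) with hlam
  have hcross : ⟪ω t, v⟫ = ⟪θ t, u⟫ := by
    rw [hu, hv, hBadj, ContinuousLinearMap.adjoint_inner_right]
    exact real_inner_comm _ _
  have expand : ∀ (x y : EuclideanSpace ℝ (Fin p)) (c d : ℝ),
      ‖c • x + d • y‖ ^ 2 = c^2*‖x‖^2 + 2*c*d*⟪x, y⟫ + d^2*‖y‖^2 := by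
    intro x y c d
    rw [← real_inner_self_eq_norm_sq, ← real_inner_self_eq_norm_sq,
      ← real_inner_self_eq_norm_sq]
    simp only [inner_add_left, inner_add_right, real_inner_smul_left,
      real_inner_smul_right, real_inner_comm x y]
    ring
  have hθ1 : θ (t+1) = (1-η) • (θ t) + (-η) • u := by rw [hθ t, hu]; module
  have hω1 : ω (t+1) = (1-η) • (ω t) + η • v := by rw [hω t, hv]; module
  have e1 : ‖θ (t+1)‖^2 + ‖ω (t+1)‖^2
      = (1-η)^2 * (‖θ t‖^2 + ‖ω t‖^2) + η^2 * (‖u‖^2 + ‖v‖^2) := by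
    rw [hθ1, hω1, expand, expand, hcross]
    ring
  have hps : (Cᵀ * C).PosSemidef := by
    have h := Matrix.posSemidef_conjTranspose_mul_self C
    rwa [Matrix.conjTranspose_eq_transpose_of_trivial] at h
  have hps2 : (C * Cᵀ).PosSemidef := by
    have h := Matrix.posSemidef_self_mul_conjTranspose C
    rwa [Matrix.conjTranspose_eq_transpose_of_trivial] at h
  have hlam0 : 0 ≤ lam := by rw [hlam]; exact lamMin_nonneg C
  have hcomm : lamMin (C * Cᵀ) = lam := by
    rw [hlam]; exact lamMin_comm C (isUnit_of_rank_eq C hC)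
  have hu2 : lam * ‖ω t‖^2 ≤ ‖u‖^2 := by
    have h := rayleigh_min hps.isHermitian (ω t)
    have heq : ⟪ω t, toEuclideanCLM (𝕜 := ℝ) (Cᵀ * C) (ω t)⟫ = ‖u‖^2 := by
      rw [_root_.map_mul, ContinuousLinearMap.mul_apply, hBadj,
        ContinuousLinearMap.adjoint_inner_right, ← hu, real_inner_self_eq_norm_sq]
    rw [heq, ← hlam] at h
    exact h
  have hv2 : lam * ‖θ t‖^2 ≤ ‖v‖^2 := by
    have h := rayleigh_min hps2.isHermitian (θ t)
    have heq : ⟪θ t, toEuclideanCLM (𝕜 := ℝ) (C * Cᵀ) (θ t)⟫ = ‖v‖^2 := by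
      rw [_root_.map_mul, ContinuousLinearMap.mul_apply, hBadj,
        ← ContinuousLinearMap.adjoint_inner_left, ← hBadj, ← hv,
        real_inner_self_eq_norm_sq]
    rw [heq, hcomm] at h
    exact h
  rw [ge_iff_le, e1]
  have hS : (0:ℝ) ≤ ‖θ t‖^2 + ‖ω t‖^2 := by positivity
  have hscal : lam/(1+lam) ≤ (1-η)^2 + η^2 * lam := by
    rw [div_le_iff₀ (by linarith)]
    nlinarith [sq_nonneg ((1+lam)*η - 1)]
  have p1 : η^2*(lam*‖ω t‖^2) ≤ η^2*‖u‖^2 := mul_le_mul_of_nonneg_left hu2 (sq_nonneg η)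
  have p2 : η^2*(lam*‖θ t‖^2) ≤ η^2*‖v‖^2 := mul_le_mul_of_nonneg_left hv2 (sq_nonneg η)
  have p3 := mul_le_mul_of_nonneg_right hscal hS
  nlinarith [p1, p2, p3]
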